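/- Let A ∈ M_n and α ∈ [0, π/2). If the block matrix [[sec(α)·Re A, A*],[A, sec(α)·Re A]] is positive semidefinite, then the numerical range W(A) is contained in the sector S_α. -/

import Mathlib

open Matrix Set ComplexOrder

variable {m : Type*}

/-- The modulus `|X| = (XᴴX)^{1/2}` of a matrix. -/
noncomputable def matAbs [Fintype m] [DecidableEq m] (X : Matrix m m ℂ) : Matrix m m ℂ :=
  ((Matrix.posSemidef_conjTranspose_mul_self X).1.eigenvectorUnitary : Matrix m m ℂ) *
    Matrix.diagonal ((↑) ∘ (√·) ∘ (Matrix.posSemidef_conjTranspose_mul_self X).1.eigenvalues) *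
    (star (Matrix.posSemidef_conjTranspose_mul_self X).1.eigenvectorUnitary : Matrix m m ℂ)

theorem matAbs_posSemidef [Fintype m] [DecidableEq m] (X : Matrix m m ℂ) :
    (matAbs X).PosSemidef := by
  unfold matAbs
  apply PosSemidef.mul_mul_conjTranspose_same
  refine PosSemidef.diagonal fun i => ?_
  simp only [Function.comp_apply, Pi.zero_apply]
  exact_mod_cast Real.sqrt_nonneg _

/-- Functional calculus: apply `f : ℝ → ℝ` to a Hermitian matrix via its spectral
decomposition (junk value `0` for non-Hermitian input). -/
noncomputable def matFun [Fintype m] [DecidableEq m] (f : ℝ → ℝ) (X : Matrix m m ℂ) :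
    Matrix m m ℂ :=
  if h : X.IsHermitian then
    (h.eigenvectorUnitary : Matrix m m ℂ) *
      Matrix.diagonal (fun i => (f (h.eigenvalues i) : ℂ)) *
      star (h.eigenvectorUnitary : Matrix m m ℂ)
  else 0

/-- Real part `Re A = (A + Aᴴ)/2`. -/
noncomputable def reM (A : Matrix m m ℂ) : Matrix m m ℂ := (1/2 : ℂ) • (A + Aᴴ)

/-- Imaginary part `Im A = (A - Aᴴ)/(2i)`. -/
noncomputable def imM (A : Matrix m m ℂ) : Matrix m m ℂ := (1/(2*Complex.I)) • (A - Aᴴ)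

/-- Numerical range `W(A) = {x* A x : x*x = 1}`. -/
def numRange [Fintype m] (A : Matrix m m ℂ) : Set ℂ :=
  {z | ∃ x : m → ℂ, star x ⬝ᵥ x = 1 ∧ z = star x ⬝ᵥ A.mulVec x}

/-- The sector `S_α = {z : Re z ≥ 0, |Im z| ≤ (Re z) tan α}`. -/
def sector (α : ℝ) : Set ℂ := {z | 0 ≤ z.re ∧ |z.im| ≤ z.re * Real.tan α}

theorem sec_block_psd_implies_sector {n : ℕ} (A : Matrix (Fin n) (Fin n) ℂ) (α : ℝ)
    (hα₀ : 0 ≤ α) (hα₁ : α < Real.pi / 2)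
    (h : (Matrix.fromBlocks ((Real.cos α)⁻¹ • reM A) Aᴴ A
      ((Real.cos α)⁻¹ • reM A)).PosSemidef) :
    numRange A ⊆ sector α := by
  rintro z ⟨x, hx, rfl⟩
  have hc : 0 < Real.cos α :=
    Real.cos_pos_of_mem_Ioo ⟨by linarith [Real.pi_pos], hα₁⟩
  set w : ℂ := star x ⬝ᵥ A.mulVec x with hw
  -- conjugate quadratic form
  have hconj : star x ⬝ᵥ Aᴴ.mulVec x = starRingEnd ℂ w := by
    have h1 : star x ⬝ᵥ A.mulVec x = star (star (A.mulVec x) ⬝ᵥ x) :=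
      Matrix.star_dotProduct _ _
    have h2 : star (A.mulVec x) = Matrix.vecMul (star x) Aᴴ := Matrix.star_mulVec A x
    have h3 : (Matrix.vecMul (star x) Aᴴ) ⬝ᵥ x = star x ⬝ᵥ Aᴴ.mulVec x :=
      (Matrix.dotProduct_mulVec _ _ _).symm
    rw [← h3, ← h2]
    rw [hw, h1, starRingEnd_apply, star_star]
  -- quadratic form of the scaled real part
  have hP : star x ⬝ᵥ ((Real.cos α)⁻¹ • reM A).mulVec x
      = (((Real.cos α)⁻¹ * w.re : ℝ) : ℂ) := by
    have : ((Real.cos α)⁻¹ • reM A).mulVec x = (Real.cos α)⁻¹ • (reM A).mulVec x :=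
      Matrix.smul_mulVec _ _ _
    rw [this, dotProduct_smul]
    have hre : star x ⬝ᵥ (reM A).mulVec x = ((w.re : ℝ) : ℂ) := by
      simp only [reM, Matrix.smul_mulVec, Matrix.add_mulVec, dotProduct_smul,
        dotProduct_add, hconj, ← hw, smul_eq_mul]
      rw [Complex.add_conj]
      push_cast
      ring
    rw [hre]
    push_cast [Complex.real_smul]
    ring
  -- key inequality from PSD applied to Sum.elim x (d • x)
  have key : ∀ d : ℂ, ‖d‖ = 1 →
      0 ≤ 2 * (Real.cos α)⁻¹ * w.re + 2 * (d * starRingEnd ℂ w).re := by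
    intro d hd
    have h2 := h.dotProduct_mulVec_nonneg (Sum.elim x (d • x))
    have hsv : star (Sum.elim x (d • x))
        = Sum.elim (star x) (starRingEnd ℂ d • star x) := by
      funext i; cases i <;> simp [mul_comm]
    rw [hsv, Matrix.fromBlocks_mulVec, sumElim_dotProduct_sumElim] at h2
    simp only [Sum.elim_comp_inl, Sum.elim_comp_inr] at h2
    have hdd : starRingEnd ℂ d * d = 1 := by
      have : d * starRingEnd ℂ d = ((Complex.normSq d : ℝ) : ℂ) := Complex.mul_conj d
      rw [mul_comm] at this
      rw [this]
      norm_cast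
      rw [← Complex.sq_norm, hd]; norm_num
    have hQ : star x ⬝ᵥ (((Real.cos α)⁻¹ • reM A).mulVec x + Aᴴ.mulVec (d • x))
        + (starRingEnd ℂ d • star x) ⬝ᵥ (A.mulVec x + ((Real.cos α)⁻¹ • reM A).mulVec (d • x))
        = ((2 * (Real.cos α)⁻¹ * w.re + 2 * (d * starRingEnd ℂ w).re : ℝ) : ℂ) := by
      rw [Matrix.mulVec_smul, Matrix.mulVec_smul]
      simp only [dotProduct_add, dotProduct_smul, smul_dotProduct, hconj, hP, ← hw,
        smul_eq_mul]
      have e1 : d * (starRingEnd ℂ d * (((Real.cos α)⁻¹ * w.re : ℝ) : ℂ))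
          = (((Real.cos α)⁻¹ * w.re : ℝ) : ℂ) := by
        rw [← mul_assoc, mul_comm d, hdd, one_mul]
      rw [e1]
      have e2 : starRingEnd ℂ d * w = starRingEnd ℂ (d * starRingEnd ℂ w) := by
        rw [RingHom.map_mul, Complex.conj_conj]
      rw [e2]
      set u := d * starRingEnd ℂ w with hu
      have e3 : u + starRingEnd ℂ u = ((2 * u.re : ℝ) : ℂ) := by
        exact_mod_cast Complex.add_conj u
      push_cast at e3 ⊢
      linear_combination e3
    rw [hQ] at h2
    exact_mod_cast (Complex.le_def.mp h2).1
  -- main bound: |w| ≤ sec α * Re w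
  have habs : ‖w‖ ≤ (Real.cos α)⁻¹ * w.re := by
    rcases eq_or_ne w 0 with h0 | h0
    · simp [h0]
    · have habs0 : (0 : ℝ) < ‖w‖ := by
        simpa using norm_pos_iff.mpr h0
      have hd : ‖-(w / ((‖w‖ : ℝ) : ℂ))‖ = 1 := by
        rw [norm_neg, norm_div]
        rw [Complex.norm_real, Real.norm_eq_abs,
          abs_of_pos habs0, div_self habs0.ne']
      have hk := key _ hd
      have hval : (-(w / ((‖w‖ : ℝ) : ℂ)) * starRingEnd ℂ w).re
          = -(‖w‖) := by
        have : -(w / ((‖w‖ : ℝ) : ℂ)) * starRingEnd ℂ w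
            = ((-(‖w‖) : ℝ) : ℂ) := by
          rw [neg_mul, div_mul_eq_mul_div, Complex.mul_conj]
          rw [← Complex.sq_norm]
          push_cast
          field_simp
        rw [this, Complex.ofReal_re]
      rw [hval] at hk
      linarith
  have hwre : 0 ≤ w.re := by
    have h1 : Real.cos α * ‖w‖ ≤ Real.cos α * ((Real.cos α)⁻¹ * w.re) :=
      mul_le_mul_of_nonneg_left habs hc.le
    rw [← mul_assoc, mul_inv_cancel₀ hc.ne', one_mul] at h1
    exact le_trans (mul_nonneg hc.le (norm_nonneg w)) h1
  refine ⟨hwre, ?_⟩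
  have htan : 0 ≤ Real.tan α := Real.tan_nonneg_of_nonneg_of_le_pi_div_two hα₀ hα₁.le
  have hsq : w.im ^ 2 ≤ (w.re * Real.tan α) ^ 2 := by
    have h1 : ‖w‖ ^ 2 = w.re ^ 2 + w.im ^ 2 := by
      rw [Complex.sq_norm, Complex.normSq_apply]; ring
    have h2 : w.re ^ 2 + w.im ^ 2 ≤ ((Real.cos α)⁻¹ * w.re) ^ 2 := by
      rw [← h1]
      exact pow_le_pow_left₀ (norm_nonneg w) habs 2
    have key2 : ((Real.cos α)⁻¹ * w.re) ^ 2 - w.re ^ 2 = (w.re * Real.tan α) ^ 2 := by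
      rw [Real.tan_eq_sin_div_cos]
      field_simp
      nlinarith [Real.sin_sq_add_cos_sq α]
    linarith
  have hrhs : 0 ≤ w.re * Real.tan α := mul_nonneg hwre htan
  calc |w.im| = Real.sqrt (w.im ^ 2) := (Real.sqrt_sq_eq_abs w.im).symm
    _ ≤ Real.sqrt ((w.re * Real.tan α) ^ 2) := Real.sqrt_le_sqrt hsq
    _ = w.re * Real.tan α := by rw [Real.sqrt_sq hrhs]
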